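/- arXiv:1706.01571 — 2 statements merged into one kernel-verified Lean document; each statement's English description precedes it below -/
import Mathlib

section
/- Let B be an integral domain and let f, g ∈ B be a regular sequence (f is a nonzerodivisor and g is a nonzerodivisor on B/(f)). Then B = B[1/f] ∩ B[1/g], i.e., any element of the fraction field of B that lies in both localizations B[1/f] and B[1/g] lies in B. -/
/-- Let `B` be an integral domain and `f, g ∈ B` a regular sequence
(`f` is a nonzerodivisor, i.e. `f ≠ 0`, and `g` is a nonzerodivisor on `B/(f)`).
Then `B = B[1/f] ∩ B[1/g]` inside `Frac(B)`: any element of the fraction field lying in both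
localizations lies in `B`. -/
theorem stmt_0 {B : Type*} [CommRing B] [IsDomain B] (f g : B)
    (hf : f ≠ 0)
    (hg : ∀ b : B, g * b ∈ Ideal.span {f} → b ∈ Ideal.span {f})
    (x : FractionRing B)
    (hxf : ∃ (b : B) (n : ℕ),
      x * (algebraMap B (FractionRing B) f) ^ n = algebraMap B (FractionRing B) b)
    (hxg : ∃ (b : B) (n : ℕ),
      x * (algebraMap B (FractionRing B) g) ^ n = algebraMap B (FractionRing B) b) :
    ∃ b : B, x = algebraMap B (FractionRing B) b := by
  obtain ⟨c, m, hc⟩ := hxg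
  set φ := algebraMap B (FractionRing B) with hφ
  have hinj : Function.Injective φ := IsFractionRing.injective B (FractionRing B)
  have hgpow : ∀ k : ℕ, ∀ a : B, g ^ k * a ∈ Ideal.span {f} → a ∈ Ideal.span {f} := by
    intro k
    induction k with
    | zero => intro a ha; simpa using ha
    | succ k ih =>
      intro a ha
      exact hg a (ih (g * a) (by rw [show g ^ k * (g * a) = g ^ (k+1) * a by ring]; exact ha))
  obtain ⟨a, n, ha⟩ := hxf
  induction n generalizing a with
  | zero => exact ⟨a, by simpa using ha⟩
  | succ n ih =>
    have key : a * g ^ m = c * f ^ (n + 1) := by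
      apply hinj
      simp only [map_mul, map_pow]
      rw [← ha, ← hc]; ring
    have hmem : a ∈ Ideal.span {f} := by
      apply hgpow m
      rw [Ideal.mem_span_singleton]
      exact ⟨c * f ^ n, by rw [mul_comm (g ^ m) a, key]; ring⟩
    obtain ⟨a', ha'⟩ := Ideal.mem_span_singleton.mp hmem
    apply ih a'
    have hfne : φ f ≠ 0 := fun h => hf (hinj (by simpa using h))
    have : x * φ f ^ n * φ f = φ a' * φ f := by
      rw [← map_mul, mul_comm a' f, ← ha']
      rw [← ha]; ring
    exact mul_right_cancel₀ hfne this
end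

section
/- Let B ↪ C be an extension of normal (integrally closed) domains such that C is integral over B. Let y ∈ B generate a principal prime ideal (y) ⊆ B, and assume that C ⊗_B B_{(y)} / (y) is a reduced ring, where B_{(y)} is the localization of B at the prime ideal yB. Then C/(y)C is a reduced ring. -/
open Polynomial

/-- If `(y)` is prime, `y ≠ 0`, `b ∉ (y)`, then from `A * b ^ j = B' * y ^ k` we get
`y ^ k ∣ A`. -/
private lemma pow_dvd_aux {B : Type*} [CommRing B] [IsDomain B] {y b : B}
    (hy : (Ideal.span {y} : Ideal B).IsPrime) (hy0 : y ≠ 0)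
    (hb : b ∉ (Ideal.span {y} : Ideal B)) :
    ∀ (k j : ℕ) (A B' : B), A * b ^ j = B' * y ^ k → y ^ k ∣ A := by
  intro k
  induction k with
  | zero => intro j A B' _; simpa using one_dvd A
  | succ k ih =>
    intro j A B' h
    have hmem : A * b ^ j ∈ Ideal.span {y} := by
      rw [h]
      exact Ideal.mul_mem_left _ _
        (Ideal.mem_span_singleton.mpr ⟨y ^ k, by ring⟩)
    have hA : A ∈ Ideal.span {y} := by
      rcases hy.mem_or_mem hmem with h1 | h1
      · exact h1
      · exact absurd (hy.mem_of_pow_mem j h1) hb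
    obtain ⟨A₂, hA₂⟩ := Ideal.mem_span_singleton.mp hA
    have h2 : A₂ * b ^ j = B' * y ^ k := by
      apply mul_left_cancel₀ hy0
      rw [hA₂] at h
      linear_combination h
    obtain ⟨d, hd⟩ := ih j A₂ B' h2
    exact ⟨d, by rw [hA₂, hd]; ring⟩

/-- The key lemma: if `x * φ(b) = φ(y) * c` with `b ∉ (y)` then `x ∈ (φ y)`. -/
private lemma key_lemma {B C : Type*} [CommRing B] [IsDomain B] [IsIntegrallyClosed B]
    [CommRing C] [IsDomain C] [IsIntegrallyClosed C]
    [Algebra B C] (hinj : Function.Injective (algebraMap B C))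
    [Algebra.IsIntegral B C]
    {y : B} (hy : (Ideal.span {y} : Ideal B).IsPrime)
    {b : B} (hb : b ∉ (Ideal.span {y} : Ideal B))
    {x c : C} (heq : x * algebraMap B C b = algebraMap B C y * c) :
    x ∈ (Ideal.span {algebraMap B C y} : Ideal C) := by
  have hb0 : b ≠ 0 := fun h => hb (h ▸ Ideal.zero_mem _)
  by_cases hy0 : y = 0
  · subst hy0
    rw [map_zero, zero_mul] at heq
    have hbC : algebraMap B C b ≠ 0 := fun h => hb0 (hinj (by rw [h, map_zero]))
    rcases mul_eq_zero.mp heq with h | h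
    · rw [h]; exact Ideal.zero_mem _
    · exact absurd h hbC
  -- main case
  let K₀ := FractionRing B
  let K := FractionRing C
  haveI : FaithfulSMul B K := (faithfulSMul_iff_algebraMap_injective B K).mpr (by
    rw [IsScalarTower.algebraMap_eq B C K]
    exact (IsFractionRing.injective C K).comp hinj)
  letI : Algebra K₀ K := FractionRing.liftAlgebra B K
  haveI : IsScalarTower B K₀ K := FractionRing.isScalarTower_liftAlgebra B K
  have hx : IsIntegral B x := Algebra.IsIntegral.isIntegral x
  have hc : IsIntegral B c := Algebra.IsIntegral.isIntegral c
  have hyK : algebraMap B K y ≠ 0 := fun h => hy0 (by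
    exact FaithfulSMul.algebraMap_injective B K (by rw [h, map_zero]))
  have hbK₀ : algebraMap B K₀ b ≠ 0 := fun h => hb0 (IsFractionRing.injective B K₀ (by
    rw [h, map_zero]))
  have hyK₀ : algebraMap B K₀ y ≠ 0 := fun h => hy0 (IsFractionRing.injective B K₀ (by
    rw [h, map_zero]))
  set u : K₀ := algebraMap B K₀ b / algebraMap B K₀ y with hu_def
  have hu0 : u ≠ 0 := div_ne_zero hbK₀ hyK₀
  set xK : K := algebraMap C K x with hxK_def
  set cK : K := algebraMap C K c with hcK_def
  have hxKint : IsIntegral K₀ xK := (hx.map (IsScalarTower.toAlgHom B C K)).tower_top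
  have hcKint : IsIntegral K₀ cK := (hc.map (IsScalarTower.toAlgHom B C K)).tower_top
  have hux : algebraMap K₀ K u * xK = cK := by
    have hb' : algebraMap B K b = algebraMap C K (algebraMap B C b) :=
      IsScalarTower.algebraMap_apply B C K b
    have hy' : algebraMap B K y = algebraMap C K (algebraMap B C y) :=
      IsScalarTower.algebraMap_apply B C K y
    have hu' : algebraMap K₀ K u = algebraMap B K b / algebraMap B K y := by
      rw [hu_def, map_div₀, ← IsScalarTower.algebraMap_apply, ← IsScalarTower.algebraMap_apply]
    rw [hu', div_mul_eq_mul_div, div_eq_iff hyK, hb', hy', hxK_def, hcK_def,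
      ← map_mul, ← map_mul]
    exact congrArg (algebraMap C K) (by linear_combination heq)
  have hFmap : minpoly K₀ xK = (minpoly B x).map (algebraMap B K₀) :=
    minpoly.isIntegrallyClosed_eq_field_fractions K₀ K hx
  have hGmap : minpoly K₀ cK = (minpoly B c).map (algebraMap B K₀) :=
    minpoly.isIntegrallyClosed_eq_field_fractions K₀ K hc
  -- the minimal polynomial of cK is the scaling of that of xK
  have haeval_c : Polynomial.aeval cK ((minpoly K₀ xK).scaleRoots u) = 0 := by
    rw [← hux]
    exact Polynomial.scaleRoots_aeval_eq_zero (minpoly.aeval K₀ xK)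
  have hmonic_s : ((minpoly K₀ xK).scaleRoots u).Monic :=
    (Polynomial.monic_scaleRoots_iff u).mpr (minpoly.monic hxKint)
  have hdvd : minpoly K₀ cK ∣ (minpoly K₀ xK).scaleRoots u := minpoly.dvd K₀ cK haeval_c
  have haeval_x : Polynomial.aeval xK ((minpoly K₀ cK).scaleRoots u⁻¹) = 0 := by
    have hinvu : algebraMap K₀ K u⁻¹ * cK = xK := by
      rw [← hux, ← mul_assoc, ← map_mul, inv_mul_cancel₀ hu0, map_one, one_mul]
    rw [← hinvu]
    exact Polynomial.scaleRoots_aeval_eq_zero (minpoly.aeval K₀ cK)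
  have hdeg_le : (minpoly K₀ xK).natDegree ≤ (minpoly K₀ cK).natDegree := by
    have h1 := Polynomial.natDegree_le_of_dvd (minpoly.dvd K₀ xK haeval_x)
      (((Polynomial.monic_scaleRoots_iff u⁻¹).mpr (minpoly.monic hcKint)).ne_zero)
    simpa [Polynomial.natDegree_scaleRoots] using h1
  have hdeg_ge : (minpoly K₀ cK).natDegree ≤ (minpoly K₀ xK).natDegree := by
    have h1 := Polynomial.natDegree_le_of_dvd hdvd hmonic_s.ne_zero
    simpa [Polynomial.natDegree_scaleRoots] using h1
  have heq_minpoly : minpoly K₀ cK = (minpoly K₀ xK).scaleRoots u := by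
    obtain ⟨t, ht⟩ := hdvd
    have hc0 : minpoly K₀ cK ≠ 0 := minpoly.ne_zero hcKint
    have ht0 : t ≠ 0 := by
      rintro rfl
      rw [mul_zero] at ht
      exact hmonic_s.ne_zero ht
    have hdegt : t.natDegree = 0 := by
      have h2 := Polynomial.natDegree_mul hc0 ht0
      rw [← ht, Polynomial.natDegree_scaleRoots] at h2
      omega
    obtain ⟨a, ha⟩ := Polynomial.natDegree_eq_zero.mp hdegt
    have ha1 : a = 1 := by
      have h1 : ((minpoly K₀ xK).scaleRoots u).leadingCoeff = 1 := hmonic_s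
      rw [ht, ← ha, Polynomial.leadingCoeff_mul, (minpoly.monic hcKint).leadingCoeff,
        one_mul, Polynomial.leadingCoeff_C] at h1
      exact h1
    rw [ht, ← ha, ha1, map_one, mul_one]
  set F := minpoly B x with hF_def
  set m := F.natDegree with hm_def
  have hFmonic : F.Monic := minpoly.monic hx
  have hmK : (minpoly K₀ xK).natDegree = m := by
    rw [hFmap]; exact hFmonic.natDegree_map _
  -- coefficient divisibility
  have hdvd_coeff : ∀ i, y ^ (m - i) ∣ F.coeff i := by
    intro i
    have h1 : (minpoly K₀ cK).coeff i
        = (minpoly K₀ xK).coeff i * u ^ ((minpoly K₀ xK).natDegree - i) := by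
      rw [heq_minpoly, Polynomial.coeff_scaleRoots]
    rw [hmK, hGmap, hFmap, Polynomial.coeff_map, Polynomial.coeff_map] at h1
    have h2 : algebraMap B K₀ ((minpoly B c).coeff i * y ^ (m - i))
        = algebraMap B K₀ (F.coeff i * b ^ (m - i)) := by
      rw [map_mul, map_mul, map_pow, map_pow, h1, hu_def, div_pow, mul_assoc,
        div_mul_cancel₀]
      exact pow_ne_zero _ hyK₀
    have h3 : (minpoly B c).coeff i * y ^ (m - i) = F.coeff i * b ^ (m - i) :=
      IsFractionRing.injective B K₀ h2
    exact pow_dvd_aux hy hy0 hb (m - i) (m - i) (F.coeff i) ((minpoly B c).coeff i) h3.symm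
  choose D hD using fun i => hdvd_coeff i
  -- build the monic polynomial annihilating w = xK / yK
  set yK : K := algebraMap B K y with hyK_def
  set w : K := xK / yK with hw_def
  have hm_pos : 0 < m := minpoly.natDegree_pos hx
  set P : Polynomial B := Polynomial.X ^ m
      + ∑ i ∈ Finset.range m, Polynomial.C (D i) * Polynomial.X ^ i with hP_def
  have hPmonic : P.Monic := by
    apply Polynomial.monic_X_pow_add
    apply lt_of_le_of_lt (Polynomial.degree_sum_le _ _)
    rw [Finset.sup_lt_iff (by exact_mod_cast WithBot.bot_lt_coe m)]
    intro i hi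
    apply lt_of_le_of_lt (Polynomial.degree_C_mul_X_pow_le _ _)
    exact_mod_cast Finset.mem_range.mp hi
  have hFaeval : Polynomial.aeval xK F = 0 := by
    rw [hxK_def, Polynomial.aeval_algebraMap_apply, minpoly.aeval, map_zero]
  have hsum : (0 : K) = ∑ i ∈ Finset.range (m + 1), algebraMap B K (F.coeff i) * xK ^ i := by
    rw [← hFaeval, Polynomial.aeval_eq_sum_range]
    exact Finset.sum_congr rfl fun i _ => Algebra.smul_def _ _
  have hwpow : ∀ i, i ≤ m → w ^ i * yK ^ m = xK ^ i * yK ^ (m - i) := by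
    intro i hi
    rw [hw_def, div_pow, div_mul_eq_mul_div, div_eq_iff (pow_ne_zero _ hyK),
      mul_assoc, ← pow_add, Nat.sub_add_cancel hi]
  have hmain : Polynomial.aeval w P * yK ^ m = 0 := by
    rw [hP_def, map_add, map_pow, Polynomial.aeval_X, map_sum]
    simp only [map_mul, Polynomial.aeval_C, map_pow, Polynomial.aeval_X]
    rw [add_mul, Finset.sum_mul, hsum, Finset.sum_range_succ, add_comm (w ^ m * yK ^ m)]
    congr 1
    · apply Finset.sum_congr rfl
      intro i hi
      have hi' : i ≤ m := le_of_lt (Finset.mem_range.mp hi)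
      rw [mul_assoc, hwpow i hi', hD i, map_mul, map_pow, ← hyK_def]
      ring
    · rw [hwpow m le_rfl, Nat.sub_self, pow_zero, mul_one,
        hFmonic.coeff_natDegree, map_one, one_mul]
  have hPaeval : Polynomial.aeval w P = 0 := by
    rcases mul_eq_zero.mp hmain with h | h
    · exact h
    · exact absurd h (pow_ne_zero _ hyK)
  have hwint : IsIntegral B w := ⟨P, hPmonic, by rwa [← Polynomial.aeval_def]⟩
  have hwC : IsIntegral C w := hwint.tower_top
  obtain ⟨c', hc'⟩ := (IsIntegrallyClosed.isIntegral_iff (K := K)).mp hwC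
  refine Ideal.mem_span_singleton.mpr ⟨c', ?_⟩
  apply IsFractionRing.injective C K
  rw [map_mul, hc', ← IsScalarTower.algebraMap_apply B C K, ← hyK_def, hw_def,
    mul_div_cancel₀ _ hyK]

/-- Let `B ↪ C` be an extension of normal (integrally closed) domains with `C`
integral over `B`. Let `y ∈ B` generate a principal prime ideal of `B`, and assume that
`C ⊗_B B_{(y)} / (y)` is reduced, where `B_{(y)}` is the localization of `B` at the prime `yB`
(so that `C ⊗_B B_{(y)}` is the localization of `C` at the image of `B \ yB`).
Then `C/(y)C` is reduced. -/
theorem stmt_1 {B C : Type*} [CommRing B] [IsDomain B] [IsIntegrallyClosed B]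
    [CommRing C] [IsDomain C] [IsIntegrallyClosed C]
    [Algebra B C] (hinj : Function.Injective (algebraMap B C))
    [Algebra.IsIntegral B C]
    (y : B) (hy : (Ideal.span {y} : Ideal B).IsPrime)
    (S : Submonoid C)
    (hS : S = Submonoid.map (algebraMap B C) (Ideal.span {y} : Ideal B).primeCompl)
    (hred : IsReduced ((Localization S) ⧸
      (Ideal.span {algebraMap C (Localization S) (algebraMap B C y)}))) :
    IsReduced (C ⧸ (Ideal.span {algebraMap B C y} : Ideal C)) := by
  have hS' : S ≤ nonZeroDivisors C := by
    rw [hS]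
    rintro s ⟨b, hb, rfl⟩
    have hb0 : b ≠ 0 := fun h => hb (by rw [h]; exact Ideal.zero_mem _)
    exact mem_nonZeroDivisors_of_ne_zero
      (fun h => hb0 (hinj (by rw [h, map_zero])))
  refine ⟨fun t ht => ?_⟩
  obtain ⟨x, rfl⟩ := Ideal.Quotient.mk_surjective t
  obtain ⟨n, hn⟩ := ht
  have hxn : x ^ n ∈ (Ideal.span {algebraMap B C y} : Ideal C) := by
    rw [← map_pow] at hn
    exact Ideal.Quotient.eq_zero_iff_mem.mp hn
  set ψ := algebraMap C (Localization S) with hψ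
  have hnil : IsNilpotent (Ideal.Quotient.mk
      (Ideal.span {ψ (algebraMap B C y)}) (ψ x)) := by
    refine ⟨n, ?_⟩
    rw [← map_pow, ← map_pow]
    apply Ideal.Quotient.eq_zero_iff_mem.mpr
    obtain ⟨d, hd⟩ := Ideal.mem_span_singleton.mp hxn
    rw [hd, map_mul]
    exact Ideal.mem_span_singleton.mpr ⟨ψ d, rfl⟩
  haveI := hred
  have h0 := hnil.eq_zero
  have hmem := Ideal.Quotient.eq_zero_iff_mem.mp h0
  obtain ⟨z, hz⟩ := Ideal.mem_span_singleton.mp hmem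
  obtain ⟨⟨cnum, s⟩, rfl⟩ := IsLocalization.mk'_surjective S z
  have hspec : IsLocalization.mk' (Localization S) cnum s * ψ (s : C) = ψ cnum :=
    IsLocalization.mk'_spec _ _ _
  have hψeq : ψ (x * (s : C)) = ψ (algebraMap B C y * cnum) := by
    rw [map_mul, map_mul, hz, mul_assoc, hspec]
  have hCeq : x * (s : C) = algebraMap B C y * cnum :=
    IsLocalization.injective (Localization S) hS' hψeq
  have hsS : (s : C) ∈ Submonoid.map (algebraMap B C) (Ideal.span {y} : Ideal B).primeCompl := by
    rw [← hS]; exact s.2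
  obtain ⟨b, hb, hbs⟩ := hsS
  have hb' : b ∉ (Ideal.span {y} : Ideal B) := hb
  have hkey : x ∈ (Ideal.span {algebraMap B C y} : Ideal C) := by
    refine key_lemma hinj hy hb' (c := cnum) ?_
    rw [← hbs] at hCeq
    exact hCeq
  exact Ideal.Quotient.eq_zero_iff_mem.mpr hkey
end
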